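/- (Key greedy-cycle lemma, g = 4) Suppose u ≥ 2t − 1 and for distinct goods j₁, j₂, j₃, j₄ the following pairwise counts hold: |j₂ ≻ j₁| ≥ u, |j₃ ≻ j₂| ≥ u, |j₄ ≻ j₃| ≥ u, |j₁ ≻ j₄| ≥ u, and |j₁ ≻ j₂| < t, |j₂ ≻ j₃| < t, |j₃ ≻ j₄| < t, |j₄ ≻ j₁| < t. Then the menu {j₁, j₃} is t-feasible (both |j₁ ≻ j₃| ≥ t and |j₃ ≻ j₁| ≥ t) and u-uncontestable against j₂ and j₄; symmetrically, so is {j₂, j₄}. -/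

import Mathlib

structure MenuProblem (N G : Type) where
  pref : N → List G
  nodup : ∀ i, (pref i).Nodup

namespace MenuProblem

variable {N G : Type} [Fintype N] [DecidableEq G]

/-- The good assigned to agent `i` when menu `O` is offered:
its favorite ranked good in `O`, if any. -/
def assigned (P : MenuProblem N G) (O : Finset G) (i : N) : Option G :=
  (P.pref i).find? (fun a => decide (a ∈ O))

/-- Number of agents assigned to good `j` when menu `O` is offered. -/
def assignedCount (P : MenuProblem N G) (O : Finset G) (j : G) : ℕ :=
  (Finset.univ.filter (fun i => P.assigned O i = some j)).card

/-- The lobby for a good `j` against menu `O`: the number of agents that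
would take `j` if it were added to the menu. -/
def lobby (P : MenuProblem N G) (O : Finset G) (j : G) : ℕ :=
  P.assignedCount (insert j O) j

/-- `|a ≻ b|`: the number of agents that would take `a` from the menu `{a, b}`. -/
def prefCount (P : MenuProblem N G) (a b : G) : ℕ :=
  P.assignedCount {a, b} a

/-- A menu is `t`-feasible if every offered good is assigned at least `t` agents. -/
def TFeasible (P : MenuProblem N G) (O : Finset G) (t : ℕ) : Prop :=
  ∀ j ∈ O, t ≤ P.assignedCount O j

/-- A menu is `u`-uncontestable if no unoffered good has a lobby of at least `u` agents. -/
def UUncontestable (P : MenuProblem N G) (O : Finset G) (u : ℕ) : Prop :=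
  ∀ j ∉ O, P.lobby O j < u

/-- A menu is `(t,u)`-stable if it is `t`-feasible and `u`-uncontestable. -/
def Stable (P : MenuProblem N G) (O : Finset G) (t u : ℕ) : Prop :=
  P.TFeasible O t ∧ P.UUncontestable O u

end MenuProblem


variable {G : Type} [DecidableEq G]

lemma find?_subset (l : List G) (S T : Finset G) (b : G) (hST : S ⊆ T) (hb : b ∈ S)
    (h : l.find? (fun a => decide (a ∈ T)) = some b) :
    l.find? (fun a => decide (a ∈ S)) = some b := by
  induction l with
  | nil => simp at h
  | cons x xs ih =>
    by_cases hx : x ∈ T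
    · rw [List.find?_cons_of_pos (by simpa using hx)] at h
      have : x = b := by simpa using h
      subst this
      rw [List.find?_cons_of_pos (by simpa using hb)]
    · rw [List.find?_cons_of_neg (by simpa using hx)] at h
      have hxS : x ∉ S := fun hxS => hx (hST hxS)
      rw [List.find?_cons_of_neg (by simpa using hxS)]
      exact ih h

lemma find?_triangle (l : List G) (a b c : G) (hab : a ≠ b) (hac : a ≠ c) (hbc : b ≠ c)
    (h : l.find? (fun x => decide (x ∈ ({b, c} : Finset G))) = some c) :
    l.find? (fun x => decide (x ∈ ({a, c} : Finset G))) = some c ∨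
    l.find? (fun x => decide (x ∈ ({a, b} : Finset G))) = some a := by
  induction l with
  | nil => simp at h
  | cons x xs ih =>
    by_cases hxa : x = a
    · subst hxa
      right
      rw [List.find?_cons_of_pos (by simp)]
    · by_cases hxc : x = c
      · subst hxc
        left
        rw [List.find?_cons_of_pos (by simp)]
      · by_cases hxb : x = b
        · subst hxb
          rw [List.find?_cons_of_pos (by simp)] at h
          simp at h
          exact absurd h hbc
        · rw [List.find?_cons_of_neg (by simp [hxb, hxc])] at h
          rcases ih h with h' | h'
          · left; rw [List.find?_cons_of_neg (by simp [hxa, hxc])]; exact h'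
          · right; rw [List.find?_cons_of_neg (by simp [hxa, hxb])]; exact h'

namespace MenuProblem

variable {N G : Type} [Fintype N] [DecidableEq G]


lemma prefCount_triangle (P : MenuProblem N G) [Fintype N] (a b c : G)
    (hab : a ≠ b) (hac : a ≠ c) (hbc : b ≠ c) :
    P.prefCount c b ≤ P.prefCount c a + P.prefCount a b := by
  classical
  have hsub : (Finset.univ.filter (fun i => P.assigned {b, c} i = some c)) ⊆
      (Finset.univ.filter (fun i => P.assigned {a, c} i = some c)) ∪
      (Finset.univ.filter (fun i => P.assigned {a, b} i = some a)) := by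
    intro i hi
    simp only [Finset.mem_filter, Finset.mem_union, Finset.mem_univ, true_and] at *
    exact find?_triangle _ a b c hab hac hbc hi
  have h1 : P.prefCount c b =
      (Finset.univ.filter (fun i => P.assigned {b, c} i = some c)).card := by
    rw [prefCount, assignedCount, Finset.pair_comm c b]
  have h2 : P.prefCount c a =
      (Finset.univ.filter (fun i => P.assigned {a, c} i = some c)).card := by
    rw [prefCount, assignedCount, Finset.pair_comm c a]
  rw [h1, h2, prefCount, assignedCount]
  calc _ ≤ _ := Finset.card_le_card hsub
    _ ≤ _ := Finset.card_union_le _ _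

lemma lobby_le_prefCount (P : MenuProblem N G) [Fintype N] (a b c : G) :
    P.lobby {a, c} b ≤ P.prefCount b c := by
  classical
  apply Finset.card_le_card
  intro i hi
  simp only [Finset.mem_filter, Finset.mem_univ, true_and] at *
  refine find?_subset _ {b, c} (insert b {a, c}) b ?_ (by simp) hi
  intro x hx
  simp only [Finset.mem_insert, Finset.mem_singleton] at *
  tauto

end MenuProblem

/-- Key greedy-cycle lemma for `g = 4`: given the cyclic pattern of pairwise counts,
the menus `{j₁, j₃}` and `{j₂, j₄}` are `t`-feasible and `u`-uncontestable against the
other two goods. -/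
theorem greedy_cycle_four (n g t u : ℕ) (P : MenuProblem (Fin n) (Fin g))
    (j₁ j₂ j₃ j₄ : Fin g)
    (h12 : j₁ ≠ j₂) (h13 : j₁ ≠ j₃) (h14 : j₁ ≠ j₄)
    (h23 : j₂ ≠ j₃) (h24 : j₂ ≠ j₄) (h34 : j₃ ≠ j₄)
    (htu : 2 * t - 1 ≤ u)
    (hu1 : u ≤ P.prefCount j₂ j₁) (hu2 : u ≤ P.prefCount j₃ j₂)
    (hu3 : u ≤ P.prefCount j₄ j₃) (hu4 : u ≤ P.prefCount j₁ j₄)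
    (ht1 : P.prefCount j₁ j₂ < t) (ht2 : P.prefCount j₂ j₃ < t)
    (ht3 : P.prefCount j₃ j₄ < t) (ht4 : P.prefCount j₄ j₁ < t) :
    (P.TFeasible {j₁, j₃} t ∧ P.lobby {j₁, j₃} j₂ < u ∧ P.lobby {j₁, j₃} j₄ < u) ∧
    (P.TFeasible {j₂, j₄} t ∧ P.lobby {j₂, j₄} j₁ < u ∧ P.lobby {j₂, j₄} j₃ < u) := by
  have ht0 : 1 ≤ t := by omega
  -- feasibility counts
  have f31 : t ≤ P.prefCount j₃ j₁ := by
    have := P.prefCount_triangle j₁ j₂ j₃ h12 h13 h23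
    omega
  have f13 : t ≤ P.prefCount j₁ j₃ := by
    have := P.prefCount_triangle j₃ j₄ j₁ h34 h13.symm h14.symm
    omega
  have f24 : t ≤ P.prefCount j₂ j₄ := by
    have := P.prefCount_triangle j₄ j₁ j₂ h14.symm h24.symm h12
    omega
  have f42 : t ≤ P.prefCount j₄ j₂ := by
    have := P.prefCount_triangle j₂ j₃ j₄ h23 h24 h34
    omega
  have pc13 : P.assignedCount {j₁, j₃} j₁ = P.prefCount j₁ j₃ := rfl
  have pc31 : P.assignedCount {j₁, j₃} j₃ = P.prefCount j₃ j₁ := by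
    rw [MenuProblem.prefCount, Finset.pair_comm j₃ j₁]
  have pc24 : P.assignedCount {j₂, j₄} j₂ = P.prefCount j₂ j₄ := rfl
  have pc42 : P.assignedCount {j₂, j₄} j₄ = P.prefCount j₄ j₂ := by
    rw [MenuProblem.prefCount, Finset.pair_comm j₄ j₂]
  have l2 : P.lobby {j₁, j₃} j₂ ≤ P.prefCount j₂ j₃ := P.lobby_le_prefCount j₁ j₂ j₃
  have l4 : P.lobby {j₁, j₃} j₄ ≤ P.prefCount j₄ j₁ := by
    have := P.lobby_le_prefCount j₃ j₄ j₁
    rwa [Finset.pair_comm j₃ j₁] at this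
  have l1 : P.lobby {j₂, j₄} j₁ ≤ P.prefCount j₁ j₂ := by
    have := P.lobby_le_prefCount j₄ j₁ j₂
    rwa [Finset.pair_comm j₄ j₂] at this
  have l3 : P.lobby {j₂, j₄} j₃ ≤ P.prefCount j₃ j₄ := P.lobby_le_prefCount j₂ j₃ j₄
  refine ⟨⟨?_, by omega, by omega⟩, ⟨?_, by omega, by omega⟩⟩
  · intro j hj
    rcases Finset.mem_insert.mp hj with h | h
    · subst h; rw [pc13]; exact f13
    · rw [Finset.mem_singleton] at h; subst h; rw [pc31]; exact f31
  · intro j hj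
    rcases Finset.mem_insert.mp hj with h | h
    · subst h; rw [pc24]; exact f24
    · rw [Finset.mem_singleton] at h; subst h; rw [pc42]; exact f42
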